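/- Let d ≥ 1 and F = F_{4^{2d+1}}. There are no a, b, c ∈ F_4 \ {0} and x, y ∈ F with x^{2^{2d+1}+1} = y^{2^{2d+1}+1} = 1, x³ ≠ 1, y³ ≠ 1, x³ ≠ y³, such that z = a + bx + cy satisfies z^{2^{2d+1}+1} = 1, z³ ≠ 1, z³ ≠ x³, z³ ≠ y³. -/
import Mathlib


/-- no four coplanar points on θ₀ in the cyclic model of PG(2d,4). -/
theorem stmt10 (d : ℕ) (hd : 1 ≤ d) (F : Type) [Field F] [Fintype F]
    (hcard : Fintype.card F = 4 ^ (2 * d + 1)) :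
    ¬ ∃ a b c x y : F, a ^ 3 = 1 ∧ b ^ 3 = 1 ∧ c ^ 3 = 1 ∧
      x ^ (2 ^ (2 * d + 1) + 1) = 1 ∧ y ^ (2 ^ (2 * d + 1) + 1) = 1 ∧
      x ^ 3 ≠ 1 ∧ y ^ 3 ≠ 1 ∧ x ^ 3 ≠ y ^ 3 ∧
      (a + b * x + c * y) ^ (2 ^ (2 * d + 1) + 1) = 1 ∧
      (a + b * x + c * y) ^ 3 ≠ 1 ∧
      (a + b * x + c * y) ^ 3 ≠ x ^ 3 ∧
      (a + b * x + c * y) ^ 3 ≠ y ^ 3 := by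
  rintro ⟨a, b, c, x, y, ha, hb, hc, hx, hy, hx3, hy3, hxy, hz, hz1, hzx, hzy⟩
  -- characteristic 2
  have hchar2 : ringChar F = 2 := by
    rw [FiniteField.even_card_iff_char_two, hcard]
    have : (4 : ℕ) ^ (2 * d + 1) = 2 ^ (2 * (2 * d + 1)) := by
      rw [pow_mul]; norm_num
    omega
  haveI : CharP F 2 := ringChar.of_eq hchar2
  set q : ℕ := 2 ^ (2 * d + 1) with hq
  -- nonvanishing
  have ha0 : a ≠ 0 := by intro h; rw [h] at ha; simp at ha
  have hb0 : b ≠ 0 := by intro h; rw [h] at hb; simp at hb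
  have hc0 : c ≠ 0 := by intro h; rw [h] at hc; simp at hc
  have hx0 : x ≠ 0 := by intro h; rw [h] at hx; simp at hx
  have hy0 : y ≠ 0 := by intro h; rw [h] at hy; simp at hy
  -- cube roots of unity: e ^ q = e ^ 2
  have hqmod : q % 3 = 2 := by
    have h4 : (4 : ℕ) ^ d % 3 = 1 := by rw [Nat.pow_mod]; simp
    have : q = 2 * 4 ^ d := by rw [hq, pow_succ, pow_mul]; ring
    omega
  have cube_pow : ∀ e : F, e ^ 3 = 1 → e ^ q = e ^ 2 := by
    intro e he
    have hdecomp : q = 3 * (q / 3) + 2 := by omega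
    rw [hdecomp, pow_add, pow_mul, he, one_pow, one_mul]
  -- unitary elements: u ^ q = u⁻¹
  have unit_pow : ∀ u : F, u ≠ 0 → u ^ (q + 1) = 1 → u ^ q = u⁻¹ := by
    intro u hu h
    field_simp
    rw [← pow_succ, h]
  -- Frobenius
  have frob : ∀ u v : F, (u + v) ^ q = u ^ q + v ^ q := fun u v => by
    rw [hq]; exact add_pow_char_pow u v 2 (2 * d + 1)
  have hzq : (a + b * x + c * y) ^ q = a ^ 2 + b ^ 2 * x⁻¹ + c ^ 2 * y⁻¹ := by
    rw [frob, frob, mul_pow, mul_pow, cube_pow a ha, cube_pow b hb, cube_pow c hc,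
      unit_pow x hx0 hx, unit_pow y hy0 hy]
  -- main equation
  have heq : (a ^ 2 + b ^ 2 * x⁻¹ + c ^ 2 * y⁻¹) * (a + b * x + c * y) = 1 := by
    rw [← hzq, ← pow_succ]
    exact hz
  have hxi : x * x⁻¹ = 1 := mul_inv_cancel₀ hx0
  have hyi : y * y⁻¹ = 1 := mul_inv_cancel₀ hy0
  have heq' : (a ^ 2 * (x * y) + b ^ 2 * y + c ^ 2 * x) * (a + b * x + c * y) = x * y := by
    linear_combination (x * y) * heq - b ^ 2 * y * (a + b * x + c * y) * hxi
      - c ^ 2 * x * (a + b * x + c * y) * hyi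
  -- key factorization
  have key : (a * b * c) ^ 2 * ((b * x + c * y) * (a + b * x) * (a + c * y)) = 0 := by
    linear_combination heq'
      + (-(x*y) + b^2*c^4*y^2 + 2*b^3*c^3*x*y + b^4*c^2*x^2 + a*b^2*c^3*y + a*b^3*c^2*x) * ha
      + (-(x*y) + 2*c^3*x*y + b*c^2*x^2 + a*c^2*x + a^2*c^4*x*y^2 + a^2*b*c^3*x^2*y) * hb
      + (x*y + b^2*c*y^2 + a*b^2*y + a^2*c*x*y^2 + a^2*b*x^2*y) * hc
  have habc : ((a * b * c) ^ 2 : F) ≠ 0 := pow_ne_zero 2 (mul_ne_zero (mul_ne_zero ha0 hb0) hc0)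
  have hP : (b * x + c * y) * (a + b * x) * (a + c * y) = 0 :=
    (mul_eq_zero.mp key).resolve_left habc
  rcases mul_eq_zero.mp hP with h | h3
  · rcases mul_eq_zero.mp h with h1 | h2
    · exact hz1 (by rw [show a + b * x + c * y = a by linear_combination h1, ha])
    · refine hzy ?_
      rw [show a + b * x + c * y = c * y by linear_combination h2, mul_pow, hc, one_mul]
  · refine hzx ?_
    rw [show a + b * x + c * y = b * x by linear_combination h3, mul_pow, hb, one_mul]
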